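/- Let φ be a contactomorphism of a compact contact manifold (Y, α) with the focal property for (p, q), and let gₙ be the scaling factor of the iterate φₙ. Then dist(Σₙ, p) + dist(φₙ(Σₙ), q) → 0 as n → ∞, where Σₙ = {z : gₙ(z) = 0}; i.e., Σₙ eventually enters every neighbourhood of p and φₙ(Σₙ) eventually enters every neighbourhood of q. -/

import Mathlib

open Function Filter Topology Metric
open scoped Manifold

/-- Pullback of a 1-form `α` on a manifold along a smooth map `φ`. -/
noncomputable def pullbackOneForm
    {E : Type*} [NormedAddCommGroup E] [NormedSpace ℝ E]
    {H : Type*} [TopologicalSpace H] (I : ModelWithCorners ℝ E H)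
    {M : Type*} [TopologicalSpace M] [ChartedSpace H M]
    (φ : M → M) (α : ∀ x : M, TangentSpace I x →L[ℝ] ℝ) (x : M) :
    TangentSpace I x →L[ℝ] ℝ :=
  (α (φ x)).comp (mfderiv I I φ x)

/-- The focal property for `(p, q)` of a contactomorphism with scaling
factor `g`. -/
def FocalProperty {M : Type*} [TopologicalSpace M]
    (φ : M → M) (g : M → ℝ) (p q : M) : Prop :=
  φ p = p ∧ φ q = q ∧ 0 < g p ∧ g q < 0 ∧
  (∀ U ∈ 𝓝 q, ∃ V ∈ 𝓝 q, IsOpen V ∧ V ⊆ U ∧ Set.MapsTo φ V V) ∧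
  (∀ z, z ≠ p → Tendsto (fun k => φ^[k] z) atTop (𝓝 q))



/-- The model space of a `ModelWithCorners` over `ℝ` is locally connected:
`I.symm : E → H` is a globally continuous retraction, and balls in `E` are connected. -/
lemma ModelWithCorners.locallyConnectedSpace'
    {E : Type*} [NormedAddCommGroup E] [NormedSpace ℝ E]
    {H : Type*} [TopologicalSpace H] (I : ModelWithCorners ℝ E H) :
    LocallyConnectedSpace H := by
  rw [locallyConnectedSpace_iff_connected_subsets]
  intro x U hU
  have hcs : Continuous I.symm := I.continuous_symm
  have hpre : I.symm ⁻¹' U ∈ 𝓝 (I x) := by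
    apply hcs.continuousAt.preimage_mem_nhds
    rwa [I.left_inv]
  obtain ⟨δ, hδ, hball⟩ := Metric.mem_nhds_iff.1 hpre
  refine ⟨I.symm '' Metric.ball (I x) δ, ?_, ?_, ?_⟩
  · apply Filter.mem_of_superset
      ((I.continuous.isOpen_preimage _ Metric.isOpen_ball).mem_nhds
        (show I x ∈ Metric.ball (I x) δ from Metric.mem_ball_self hδ))
    intro h hh
    exact ⟨I h, hh, I.left_inv h⟩
  · exact (convex_ball (I x) δ).isPreconnected.image _ hcs.continuousOn
  · rintro _ ⟨w, hw, rfl⟩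
    exact hball hw


/-- In a charted space modelled on a nontrivial normed space, no point is isolated. -/
lemma exists_ne_mem_of_mem_nhds
    {E : Type*} [NormedAddCommGroup E] [NormedSpace ℝ E] [Nontrivial E]
    {H : Type*} [TopologicalSpace H] (I : ModelWithCorners ℝ E H)
    {M : Type*} [TopologicalSpace M] [ChartedSpace H M]
    (p : M) {s : Set M} (hs : s ∈ 𝓝 p) : ∃ y ∈ s, y ≠ p := by
  set e := extChartAt I p with he
  set pt := e p with hpt
  have hptt : pt ∈ e.target := mem_extChartAt_target (I := I) p
  have hptr : pt ∈ Set.range I := extChartAt_target_subset_range (I := I) p hptt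
  -- pt is in the closure of (range I) \ {pt}
  have hclos : pt ∈ closure (Set.range I \ {pt}) := by
    have hci : pt ∈ closure (interior (Set.range I)) := I.range_subset_closure_interior hptr
    rw [Metric.mem_closure_iff]
    intro δ hδ
    by_cases hint : pt ∈ interior (Set.range I)
    · obtain ⟨δ₁, hδ₁, hb₁⟩ := Metric.isOpen_iff.1 isOpen_interior pt hint
      obtain ⟨v, hv⟩ := exists_ne (0 : E)
      have hvn : 0 < ‖v‖ := norm_pos_iff.2 hv
      set t : ℝ := min δ δ₁ / (2 * ‖v‖) with ht
      have htpos : 0 < t := by positivity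
      refine ⟨pt + t • v, ?_, ?_⟩
      · constructor
        · apply interior_subset
          apply hb₁
          simp only [Metric.mem_ball, dist_eq_norm]
          rw [add_sub_cancel_left, norm_smul, Real.norm_eq_abs, abs_of_pos htpos]
          rw [ht, div_mul_eq_mul_div, mul_comm]
          calc ‖v‖ * min δ δ₁ / (2 * ‖v‖) = min δ δ₁ / 2 := by
                field_simp
            _ < δ₁ := by
                have := min_le_right δ δ₁
                linarith [lt_min hδ hδ₁]
        · simp only [Set.mem_singleton_iff]
          intro h
          have : t • v = 0 := by
            have := congrArg (fun w => w - pt) h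
            simpa using this
          rcases smul_eq_zero.1 this with h' | h'
          · exact absurd h' (ne_of_gt htpos)
          · exact hv h'
      · rw [dist_comm, dist_eq_norm, add_sub_cancel_left, norm_smul, Real.norm_eq_abs,
          abs_of_pos htpos, ht, div_mul_eq_mul_div, mul_comm]
        calc ‖v‖ * min δ δ₁ / (2 * ‖v‖) = min δ δ₁ / 2 := by field_simp
          _ < δ := by
              have := min_le_left δ δ₁
              linarith [lt_min hδ hδ₁]
    · obtain ⟨w, hw, hwd⟩ := Metric.mem_closure_iff.1 hci δ hδ
      refine ⟨w, ⟨interior_subset hw, ?_⟩, hwd⟩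
      simp only [Set.mem_singleton_iff]
      rintro rfl
      exact hint hw
  have hne : (𝓝[Set.range I \ {pt}] pt).NeBot := mem_closure_iff_nhdsWithin_neBot.1 hclos
  -- pull back to M
  have hts : e.target ∈ 𝓝[Set.range I \ {pt}] pt :=
    nhdsWithin_mono pt Set.diff_subset (extChartAt_target_mem_nhdsWithin (I := I) p)
  have hcts : ContinuousAt e.symm pt := continuousAt_extChartAt_symm (I := I) p
  have hsymm : e.symm pt = p := extChartAt_to_inv (I := I) p
  have hpres : e.symm ⁻¹' s ∈ 𝓝[Set.range I \ {pt}] pt := by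
    apply nhdsWithin_le_nhds
    apply hcts.preimage_mem_nhds
    rwa [hsymm]
  have hself : Set.range I \ {pt} ∈ 𝓝[Set.range I \ {pt}] pt := self_mem_nhdsWithin
  obtain ⟨w, hw⟩ := Filter.nonempty_of_mem (Filter.inter_mem (Filter.inter_mem hpres hts) hself)
  obtain ⟨⟨hws, hwt⟩, hwr, hwne⟩ := hw
  refine ⟨e.symm w, hws, ?_⟩
  intro h
  apply hwne
  have : e (e.symm w) = e p := by rw [h]
  rw [e.right_inv hwt] at this
  simp only [Set.mem_singleton_iff]
  rw [this, ← hpt]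


/-- If a contactomorphism `φ` of a compact contact manifold has the focal
property for `(p, q)` and `Σₙ = {z : (φₙ*α)_z = α_z}` (the vanishing locus of
the scaling factor of the iterate `φₙ`), then
`dist(Σₙ, p) + dist(φₙ(Σₙ), q) → 0` as `n → ∞`. -/
theorem stmt_10
    {E : Type*} [NormedAddCommGroup E] [NormedSpace ℝ E]
    {H : Type*} [TopologicalSpace H] (I : ModelWithCorners ℝ E H)
    {M : Type*} [MetricSpace M] [ChartedSpace H M]
    [IsManifold I (⊤ : ℕ∞) M] [CompactSpace M]
    (α : ∀ x : M, TangentSpace I x →L[ℝ] ℝ)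
    (φ : M → M) (hφ : ContMDiff I I (⊤ : ℕ∞) φ)
    (g : M → ℝ) (hg : ContMDiff I 𝓘(ℝ, ℝ) (⊤ : ℕ∞) g)
    (hscal : ∀ x, pullbackOneForm I φ α x = Real.exp (g x) • α x)
    (p q : M) (hfocal : FocalProperty φ g p q) :
    Tendsto (fun n : ℕ =>
        infDist p {z | pullbackOneForm I (φ^[n]) α z = α z} +
        infDist q ((φ^[n]) '' {z | pullbackOneForm I (φ^[n]) α z = α z}))
      atTop (𝓝 0) := by
  obtain ⟨hp, hq, hgp, hgq, hinv, hattr⟩ := hfocal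
  have hgc : Continuous g := hg.continuous
  have hφc : Continuous φ := hφ.continuous
  -- the additive cocycle
  set gn : ℕ → M → ℝ := fun n z => ∑ k ∈ Finset.range n, g (φ^[k] z) with hgn
  have hmd : ∀ n, MDifferentiable I I (φ^[n]) := by
    intro n
    induction n with
    | zero => simpa using mdifferentiable_id (I := I)
    | succ n ih =>
      rw [Function.iterate_succ']
      exact (hφ.mdifferentiable (by simp)).comp ih
  have hpull : ∀ (n : ℕ) (z : M), pullbackOneForm I (φ^[n]) α z
      = Real.exp (gn n z) • α z := by
    intro n
    induction n with
    | zero =>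
      intro z
      simp only [hgn, Function.iterate_zero, Finset.range_zero, Finset.sum_empty,
        Real.exp_zero, one_smul, pullbackOneForm]
      rw [mfderiv_id]
      exact ContinuousLinearMap.comp_id _
    | succ n ih =>
      intro z
      have hstep : pullbackOneForm I (φ^[n + 1]) α z
          = (pullbackOneForm I φ α (φ^[n] z)).comp (mfderiv I I (φ^[n]) z) := by
        rw [show φ^[n + 1] = φ ∘ φ^[n] from Function.iterate_succ' φ n]
        unfold pullbackOneForm
        rw [mfderiv_comp z ((hφ.mdifferentiable (by simp)) (φ^[n] z)) (hmd n z)]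
        rw [← ContinuousLinearMap.comp_assoc]
        rfl
      rw [hstep, hscal (φ^[n] z), ContinuousLinearMap.smul_comp]
      have hco : (α (φ^[n] z)).comp (mfderiv I I (φ^[n]) z)
          = pullbackOneForm I (φ^[n]) α z := rfl
      rw [hco, ih z, smul_smul, ← Real.exp_add]
      have hsum : gn (n + 1) z = g (φ^[n] z) + gn n z := by
        rw [hgn]
        simp only []
        rw [Finset.sum_range_succ, add_comm]
      rw [hsum]
  have hmem : ∀ (n : ℕ) (z : M), gn n z = 0 →
      z ∈ {z | pullbackOneForm I (φ^[n]) α z = α z} := by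
    intro n z h
    simp only [Set.mem_setOf_eq, hpull n z, h, Real.exp_zero, one_smul]
  have hgncont : ∀ n, Continuous (gn n) := by
    intro n
    exact continuous_finset_sum _ fun k _ => hgc.comp (hφc.iterate k)
  rcases subsingleton_or_nontrivial E with hE | hE
  · -- trivial tangent spaces: the set is everything
    have huniv : ∀ n : ℕ, {z | pullbackOneForm I (φ^[n]) α z = α z} = Set.univ := by
      intro n
      apply Set.eq_univ_iff_forall.2
      intro z
      show pullbackOneForm I (φ^[n]) α z = α z
      apply ContinuousLinearMap.ext
      intro v
      have hv : v = 0 := by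
        haveI : Subsingleton (TangentSpace I z) := hE
        exact Subsingleton.elim _ _
      rw [hv, map_zero, map_zero]
    have hzero : ∀ n : ℕ,
        infDist p {z | pullbackOneForm I (φ^[n]) α z = α z} +
        infDist q ((φ^[n]) '' {z | pullbackOneForm I (φ^[n]) α z = α z}) = 0 := by
      intro n
      have h1 : infDist p {z | pullbackOneForm I (φ^[n]) α z = α z} = 0 := by
        rw [huniv n]
        exact infDist_zero_of_mem (Set.mem_univ p)
      have h2 : infDist q ((φ^[n]) '' {z | pullbackOneForm I (φ^[n]) α z = α z}) = 0 := by
        rw [huniv n]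
        exact infDist_zero_of_mem ⟨q, Set.mem_univ q, Function.iterate_fixed hq n⟩
      rw [h1, h2, add_zero]
    exact tendsto_const_nhds.congr (fun n => (hzero n).symm)
  · -- main case
    haveI : LocallyConnectedSpace H := I.locallyConnectedSpace'
    haveI : LocallyConnectedSpace M := ChartedSpace.locallyConnectedSpace H M
    rw [Metric.tendsto_atTop]
    intro ε hε
    have hε4 : 0 < ε / 4 := by linarith
    -- invariant neighborhood of q inside ball q (ε/4)
    obtain ⟨V, hV𝓝, hVopen, hVsub, hVmap⟩ :=
      hinv (Metric.ball q (ε / 4)) (Metric.ball_mem_nhds q hε4)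
    have hqV : q ∈ V := mem_of_mem_nhds hV𝓝
    -- small ball around p where g is positive
    have hopeng : IsOpen {x : M | 0 < g x} := isOpen_lt continuous_const hgc
    obtain ⟨r₀, hr₀, hball₀⟩ := Metric.isOpen_iff.1 hopeng p hgp
    set r : ℝ := min r₀ (ε / 4) / 2 with hrdef
    have hrmin : 0 < min r₀ (ε / 4) := lt_min hr₀ hε4
    have hrpos : 0 < r := by positivity
    have hrlt : r < min r₀ (ε / 4) := by
      rw [hrdef]; linarith
    have hcbsub : Metric.closedBall p r ⊆ Metric.ball p (min r₀ (ε / 4)) :=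
      Metric.closedBall_subset_ball hrlt
    have hcbg : Metric.closedBall p r ⊆ {x : M | 0 < g x} := fun x hx =>
      hball₀ (Metric.ball_subset_ball (min_le_left _ _) (hcbsub hx))
    -- min of g on the closed ball
    obtain ⟨xm, hxm, hxmin⟩ :=
      (Metric.isClosed_closedBall.isCompact).exists_isMinOn
        ⟨p, Metric.mem_closedBall_self hrpos.le⟩ hgc.continuousOn
    set m : ℝ := g xm with hmdef
    have hm : 0 < m := hcbg hxm
    -- global min and max of g
    obtain ⟨xg, -, hxg⟩ := isCompact_univ.exists_isMinOn ⟨p, Set.mem_univ p⟩ hgc.continuousOn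
    set c0 : ℝ := g xg with hc0def
    have hc0 : ∀ x : M, c0 ≤ g x := fun x => hxg (Set.mem_univ x)
    have hc0neg : c0 < 0 := lt_of_le_of_lt (hc0 q) hgq
    obtain ⟨xM, -, hxM⟩ := isCompact_univ.exists_isMaxOn ⟨p, Set.mem_univ p⟩ hgc.continuousOn
    set c1 : ℝ := g xM with hc1def
    have hc1 : ∀ x : M, g x ≤ c1 := fun x => hxM (Set.mem_univ x)
    -- uniform transit time from the complement of ball p r into V
    have hcov : (Metric.ball p r)ᶜ ⊆ ⋃ k : ℕ, φ^[k] ⁻¹' V := by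
      intro x hx
      have hxp : x ≠ p := by
        rintro rfl
        exact hx (Metric.mem_ball_self hrpos)
      obtain ⟨k, hk⟩ := ((hattr x hxp).eventually (hVopen.mem_nhds hqV)).exists
      exact Set.mem_iUnion.2 ⟨k, hk⟩
    obtain ⟨t, ht⟩ := (Metric.isOpen_ball.isClosed_compl.isCompact).elim_finite_subcover
      (fun k : ℕ => φ^[k] ⁻¹' V) (fun k => hVopen.preimage (hφc.iterate k)) hcov
    obtain ⟨N₀, hN₀⟩ : ∃ N₀ : ℕ, ∀ x : M, x ∉ Metric.ball p r → ∃ k ≤ N₀, φ^[k] x ∈ V := by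
      refine ⟨t.sup id, fun x hx => ?_⟩
      have := ht hx
      simp only [Set.mem_iUnion] at this
      obtain ⟨k, hkt, hk⟩ := this
      exact ⟨k, Finset.le_sup (f := id) hkt, hk⟩
    -- connected neighborhood of p inside ball p r, and a point y ≠ p in it
    obtain ⟨C, hC𝓝, hCconn, hCsub⟩ :=
      locallyConnectedSpace_iff_connected_subsets.1 ‹LocallyConnectedSpace M› p
        (Metric.ball p r) (Metric.ball_mem_nhds p hrpos)
    obtain ⟨y, hyC, hyp⟩ := exists_ne_mem_of_mem_nhds I p hC𝓝
    have hpC : p ∈ C := mem_of_mem_nhds hC𝓝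
    -- eventually negative sums at y
    have hytend : Tendsto (fun k => g (φ^[k] y)) atTop (𝓝 (g q)) :=
      (hgc.tendsto q).comp (hattr y hyp)
    have hev : ∀ᶠ k in atTop, g (φ^[k] y) < g q / 2 :=
      hytend.eventually_lt_const (by linarith)
    obtain ⟨K₂, hK₂⟩ := eventually_atTop.1 hev
    obtain ⟨L₂, hL₂⟩ := exists_nat_gt ((K₂ : ℝ) * c1 / (-(g q / 2)))
    have hgy : ∀ n : ℕ, K₂ + L₂ + 1 ≤ n → gn n y ≤ 0 := by
      intro n hn
      have hK₂n : K₂ ≤ n := by omega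
      have hsplit : gn n y = (∑ k ∈ Finset.range K₂, g (φ^[k] y))
          + ∑ k ∈ Finset.Ico K₂ n, g (φ^[k] y) := by
        rw [hgn]
        simp only []
        rw [Finset.range_eq_Ico, ← Finset.sum_Ico_consecutive _ (Nat.zero_le K₂) hK₂n,
          ← Finset.range_eq_Ico]
      have hb1 : (∑ k ∈ Finset.range K₂, g (φ^[k] y)) ≤ (K₂ : ℝ) * c1 := by
        calc (∑ k ∈ Finset.range K₂, g (φ^[k] y)) ≤ (Finset.range K₂).card • c1 :=
              Finset.sum_le_card_nsmul _ _ _ (fun k _ => hc1 _)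
          _ = (K₂ : ℝ) * c1 := by rw [Finset.card_range, nsmul_eq_mul]
      have hb2 : (∑ k ∈ Finset.Ico K₂ n, g (φ^[k] y)) ≤ ((n - K₂ : ℕ) : ℝ) * (g q / 2) := by
        calc (∑ k ∈ Finset.Ico K₂ n, g (φ^[k] y)) ≤ (Finset.Ico K₂ n).card • (g q / 2) :=
              Finset.sum_le_card_nsmul _ _ _
                (fun k hk => (hK₂ k (Finset.mem_Ico.1 hk).1).le)
          _ = ((n - K₂ : ℕ) : ℝ) * (g q / 2) := by rw [Nat.card_Ico, nsmul_eq_mul]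
      have hnK : (L₂ + 1 : ℕ) ≤ n - K₂ := by omega
      have hnKR : ((L₂ : ℝ) + 1) ≤ ((n - K₂ : ℕ) : ℝ) := by exact_mod_cast hnK
      have hcpos : 0 < -(g q / 2) := by linarith
      have hL₂' : (K₂ : ℝ) * c1 < (L₂ : ℝ) * (-(g q / 2)) := (div_lt_iff₀ hcpos).1 hL₂
      have hmul : ((n - K₂ : ℕ) : ℝ) * (g q / 2) ≤ ((L₂ : ℝ) + 1) * (g q / 2) :=
        mul_le_mul_of_nonpos_right hnKR (by linarith : g q / 2 ≤ 0)
      linarith [hsplit, hb1, hb2, hmul, hL₂', hgq]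
    -- N₁ : beyond this, any zero of gn has its orbit reaching V
    obtain ⟨L₁, hL₁⟩ := exists_nat_gt ((N₀ : ℝ) * (-c0) / m)
    refine ⟨N₀ + L₁ + 2 + (K₂ + L₂ + 1), fun n hn => ?_⟩
    have hnN₁ : N₀ + L₁ + 2 ≤ n := by omega
    have hnN₂ : K₂ + L₂ + 1 ≤ n := by omega
    -- gn n p ≥ 0
    have hnp : 0 ≤ gn n p := by
      have : gn n p = (n : ℝ) * g p := by
        rw [hgn]
        simp only [Function.iterate_fixed hp]
        rw [Finset.sum_const, Finset.card_range, nsmul_eq_mul]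
      rw [this]
      positivity
    -- IVT: a zero of gn n in C
    obtain ⟨z, hzC, hz0⟩ : ∃ z ∈ C, gn n z = 0 := by
      have h0 : (0 : ℝ) ∈ Set.Icc (gn n y) (gn n p) := ⟨hgy n hnN₂, hnp⟩
      obtain ⟨z, hz, hz'⟩ := hCconn.intermediate_value hyC hpC (hgncont n).continuousOn h0
      exact ⟨z, hz, hz'⟩
    have hzS : z ∈ {z | pullbackOneForm I (φ^[n]) α z = α z} := hmem n z hz0
    have hzball : z ∈ Metric.ball p r := hCsub hzC
    -- the image point is in V
    have hkey : φ^[n] z ∈ V := by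
      by_cases hA : ∃ k ≤ n - N₀, φ^[k] z ∉ Metric.ball p r
      · obtain ⟨k, hkn, hk⟩ := hA
        obtain ⟨j, hjN, hj⟩ := hN₀ _ hk
        have hkj : j + k ≤ n := by omega
        have hjk : φ^[j + k] z ∈ V := by
          rw [Function.iterate_add_apply]
          exact hj
        have hrw : φ^[n] z = φ^[n - (j + k)] (φ^[j + k] z) := by
          rw [← Function.iterate_add_apply]
          congr 1
          omega
        rw [hrw]
        exact (hVmap.iterate (n - (j + k))) hjk
      · exfalso
        push_neg at hA
        have hsub : Finset.range (n - N₀) ⊆ Finset.range n :=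
          Finset.range_subset_range.2 (by omega)
        have h1 : ∀ k ∈ Finset.range (n - N₀), m - c0 ≤ g (φ^[k] z) - c0 := by
          intro k hk
          have hk' : k ≤ n - N₀ := (Finset.mem_range.1 hk).le
          have hball : φ^[k] z ∈ Metric.closedBall p r :=
            Metric.ball_subset_closedBall (hA k hk')
          have hmle : m ≤ g (φ^[k] z) := hxmin hball
          linarith
        have h2 : ((n - N₀ : ℕ) : ℝ) * (m - c0)
            ≤ ∑ k ∈ Finset.range (n - N₀), (g (φ^[k] z) - c0) := by
          calc ((n - N₀ : ℕ) : ℝ) * (m - c0)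
              = ∑ _k ∈ Finset.range (n - N₀), (m - c0) := by
                rw [Finset.sum_const, Finset.card_range, nsmul_eq_mul]
            _ ≤ _ := Finset.sum_le_sum h1
        have h3 : (∑ k ∈ Finset.range (n - N₀), (g (φ^[k] z) - c0))
            ≤ ∑ k ∈ Finset.range n, (g (φ^[k] z) - c0) :=
          Finset.sum_le_sum_of_subset_of_nonneg hsub
            (fun k _ _ => by linarith [hc0 (φ^[k] z)])
        have h4 : (∑ k ∈ Finset.range n, (g (φ^[k] z) - c0)) = gn n z - (n : ℝ) * c0 := by
          rw [Finset.sum_sub_distrib, Finset.sum_const, Finset.card_range, nsmul_eq_mul, hgn]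
        have hcast : ((n - N₀ : ℕ) : ℝ) = (n : ℝ) - (N₀ : ℝ) := by
          have hle : N₀ ≤ n := by omega
          push_cast [Nat.cast_sub hle]
          ring
        have hLm : (N₀ : ℝ) * (-c0) < (L₁ : ℝ) * m := (div_lt_iff₀ hm).1 hL₁
        have hge : (L₁ + 2 : ℕ) ≤ n - N₀ := by omega
        have hgeR : ((L₁ : ℝ) + 2) ≤ ((n - N₀ : ℕ) : ℝ) := by exact_mod_cast hge
        have hfin : ((n - N₀ : ℕ) : ℝ) * (m - c0) ≤ 0 - (n : ℝ) * c0 := by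
          have := le_trans h2 h3
          rw [h4, hz0] at this
          linarith
        rw [hcast] at hfin hgeR
        nlinarith [hm, hc0neg, hLm, hgeR, hfin]
    -- conclude
    have hd1 : infDist p {z | pullbackOneForm I (φ^[n]) α z = α z} ≤ dist p z :=
      infDist_le_dist_of_mem hzS
    have hd2 : infDist q ((φ^[n]) '' {z | pullbackOneForm I (φ^[n]) α z = α z})
        ≤ dist q (φ^[n] z) := infDist_le_dist_of_mem (Set.mem_image_of_mem _ hzS)
    have hdz : dist p z < ε / 4 := by
      rw [dist_comm]
      calc dist z p < r := Metric.mem_ball.1 hzball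
        _ < min r₀ (ε / 4) := hrlt
        _ ≤ ε / 4 := min_le_right _ _
    have hdq : dist q (φ^[n] z) < ε / 4 := by
      rw [dist_comm]
      exact Metric.mem_ball.1 (hVsub hkey)
    rw [Real.dist_eq, sub_zero, abs_of_nonneg (add_nonneg infDist_nonneg infDist_nonneg)]
    linarith
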